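/- Let d ≥ 1 and n ≥ 1 be integers, let v ∈ ℤ^d, and let π be a permutation of {1,…,d}. Then the Kuhn simplex k(v,π) is contained in S^n = {x ∈ ℝ^d : n ≥ x_1 ≥ x_2 ≥ … ≥ x_d ≥ 0} if and only if v ∈ S^{n−1} and, for every j with 1 ≤ j < d such that v_j = v_{j+1}, the index j precedes j+1 in π (i.e. π⁻¹(j) < π⁻¹(j+1)). -/
import Mathlib


/-- The right `d`-simplex `S^α = {x ∈ ℝ^d : α ≥ x_1 ≥ x_2 ≥ … ≥ x_d ≥ 0}`
(coordinates indexed by `Fin d`, in order). -/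
def Sset (d : ℕ) (α : ℝ) : Set (Fin d → ℝ) :=
  {x | (∀ i : Fin d, 0 ≤ x i ∧ x i ≤ α) ∧ ∀ i j : Fin d, i ≤ j → x j ≤ x i}

/-- The Kuhn simplex `k(v,π) = {x : 1 ≥ (x−v)_{π(1)} ≥ … ≥ (x−v)_{π(d)} ≥ 0}`. -/
def kuhn (d : ℕ) (v : Fin d → ℝ) (π : Equiv.Perm (Fin d)) : Set (Fin d → ℝ) :=
  {x | (∀ i : Fin d, 0 ≤ x (π i) - v (π i) ∧ x (π i) - v (π i) ≤ 1) ∧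
       ∀ i j : Fin d, i ≤ j → x (π j) - v (π j) ≤ x (π i) - v (π i)}

/-- `(v,π)` with `v ∈ ℤ^d` is admissible for `m` if `v ∈ S^{m-1}` and whenever
`v_j = v_{j+1}`, `j` precedes `j+1` in `π`, i.e. `π⁻¹(j) < π⁻¹(j+1)`. -/
def admissible (d m : ℕ) (v : Fin d → ℤ) (π : Equiv.Perm (Fin d)) : Prop :=
  ((fun i => (v i : ℝ)) ∈ Sset d ((m : ℝ) - 1)) ∧
  ∀ (j : Fin d) (h : (j : ℕ) + 1 < d),
    v j = v ⟨(j : ℕ) + 1, h⟩ → π.symm j < π.symm ⟨(j : ℕ) + 1, h⟩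

private lemma chain_aux {d : ℕ} (x : Fin d → ℝ)
    (h : ∀ (j : ℕ) (hj : j + 1 < d), x ⟨j + 1, hj⟩ ≤ x ⟨j, Nat.lt_of_succ_lt hj⟩) :
    ∀ i j : Fin d, i ≤ j → x j ≤ x i := by
  intro i j hij
  obtain ⟨jv, hjv⟩ := j
  simp only [Fin.le_def] at hij
  induction jv with
  | zero =>
    have : i = ⟨0, hjv⟩ := Fin.ext (by simp only [Fin.val_mk] at hij ⊢; omega)
    rw [this]
  | succ m ih =>
    by_cases hcase : (i : ℕ) = m + 1
    · have : i = ⟨m + 1, hjv⟩ := Fin.ext hcase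
      rw [this]
    · have h1 : x ⟨m + 1, hjv⟩ ≤ x ⟨m, Nat.lt_of_succ_lt hjv⟩ := h m hjv
      have h2 : x ⟨m, Nat.lt_of_succ_lt hjv⟩ ≤ x i := ih (Nat.lt_of_succ_lt hjv) (by omega)
      linarith

theorem kuhn_subset_Sset_iff (d n : ℕ) (hd : 1 ≤ d) (hn : 1 ≤ n)
    (v : Fin d → ℤ) (π : Equiv.Perm (Fin d)) :
    kuhn d (fun i => (v i : ℝ)) π ⊆ Sset d (n : ℝ) ↔ admissible d n v π := by
  constructor
  · intro hsub
    -- v itself is in the Kuhn simplex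
    have hv0 : (fun i => (v i : ℝ)) ∈ kuhn d (fun i => (v i : ℝ)) π := by
      constructor
      · intro i; simp
      · intro i j _; simp
    have hvS := hsub hv0
    -- v + 1 is in the Kuhn simplex
    have hv1 : (fun i => (v i : ℝ) + 1) ∈ kuhn d (fun i => (v i : ℝ)) π := by
      constructor
      · intro i; simp
      · intro i j _; simp
    have hv1S := hsub hv1
    constructor
    · constructor
      · intro i
        refine ⟨(hvS.1 i).1, ?_⟩
        have := (hv1S.1 i).2
        simp only at this
        linarith
      · intro i j hij
        exact hvS.2 i j hij
    · intro j h hvj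
      by_contra hcon
      have hne : π.symm j ≠ π.symm ⟨(j : ℕ) + 1, h⟩ := by
        intro heq
        have := π.symm.injective heq
        exact absurd (congrArg Fin.val this) (by simp)
      have hlt : π.symm ⟨(j : ℕ) + 1, h⟩ < π.symm j := by
        rcases lt_or_ge (π.symm j) (π.symm ⟨(j : ℕ) + 1, h⟩) with h1 | h1
        · exact absurd h1 hcon
        · exact lt_of_le_of_ne h1 (fun e => hne e.symm)
      set c := π.symm ⟨(j : ℕ) + 1, h⟩ with hc
      set x : Fin d → ℝ := fun k => (v k : ℝ) + (if π.symm k ≤ c then 1 else 0) with hxdef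
      have hxk : x ∈ kuhn d (fun i => (v i : ℝ)) π := by
        constructor
        · intro i
          simp only [hxdef, Equiv.symm_apply_apply]
          constructor
          · split_ifs <;> simp
          · split_ifs <;> simp
        · intro i j' hij
          simp only [hxdef, Equiv.symm_apply_apply]
          have : (if j' ≤ c then (1:ℝ) else 0) ≤ (if i ≤ c then (1:ℝ) else 0) := by
            split_ifs with h1 h2 h2
            · exact le_refl _
            · exact absurd (le_trans hij h1) h2
            · norm_num
            · exact le_refl _
          linarith
      have hxS := hsub hxk
      have hle : (⟨(j : ℕ), Nat.lt_of_succ_lt h⟩ : Fin d) ≤ ⟨(j : ℕ) + 1, h⟩ := by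
        simp [Fin.le_def]
      have key := hxS.2 ⟨(j : ℕ), Nat.lt_of_succ_lt h⟩ ⟨(j : ℕ) + 1, h⟩ hle
      have hj' : (⟨(j : ℕ), Nat.lt_of_succ_lt h⟩ : Fin d) = j := Fin.ext rfl
      rw [hj'] at key
      have e1 : x ⟨(j : ℕ) + 1, h⟩ = (v ⟨(j : ℕ) + 1, h⟩ : ℝ) + 1 := by
        simp only [hxdef]
        rw [if_pos (le_refl c)]
      have e2 : x j = (v j : ℝ) := by
        simp only [hxdef]
        rw [if_neg (not_le.mpr hlt)]
        ring
      rw [e1, e2] at key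
      have : (v j : ℝ) = (v ⟨(j : ℕ) + 1, h⟩ : ℝ) := by exact_mod_cast hvj
      linarith
  · rintro ⟨hS, hadm⟩ x hx
    have hxval : ∀ k : Fin d, 0 ≤ x k - (v k : ℝ) ∧ x k - (v k : ℝ) ≤ 1 := by
      intro k
      have := hx.1 (π.symm k)
      simpa using this
    constructor
    · intro i
      have h1 := hxval i
      have h2 := hS.1 i
      simp only at h2
      constructor
      · linarith [h1.1, h2.1]
      · linarith [h1.2, h2.2]
    · refine chain_aux x ?_
      intro j hj
      set j1 : Fin d := ⟨j + 1, hj⟩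
      set j0 : Fin d := ⟨j, Nat.lt_of_succ_lt hj⟩
      have hvle : (v j1 : ℝ) ≤ (v j0 : ℝ) := hS.2 j0 j1 (by simp [Fin.le_def, j0, j1])
      have hb1 := hxval j1
      have hb0 := hxval j0
      by_cases hveq : v j0 = v j1
      · have hlt := hadm j0 (by simpa [j0] using hj) (by simpa [j0, j1] using hveq)
        have hj0j1 : (⟨(j0 : ℕ) + 1, by simpa [j0] using hj⟩ : Fin d) = j1 := Fin.ext rfl
        rw [hj0j1] at hlt
        have key := hx.2 (π.symm j0) (π.symm j1) (le_of_lt hlt)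
        simp only [Equiv.apply_symm_apply] at key
        have : (v j0 : ℝ) = (v j1 : ℝ) := by exact_mod_cast hveq
        linarith
      · have : v j1 + 1 ≤ v j0 := by
          have : v j1 ≤ v j0 := by exact_mod_cast hvle
          omega
        have hr : (v j1 : ℝ) + 1 ≤ (v j0 : ℝ) := by exact_mod_cast this
        linarith [hb1.2, hb0.1]
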